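/- Let G be a residually finite group, H ≤ G a subgroup, and g ∈ G. Then the following are equivalent: (1) for every finite index normal subgroup K ⊴ G there exists a finite index normal subgroup L ≤ K such that the centralizer of the image of g in the image of H in G/L is contained in the image of C_H(g)·K; (2) in the profinite completion Ĝ of G, the closure of C_H(g) equals the centralizer of g in the closure of H. -/

import Mathlib

/-- A group is residually finite if every nontrivial element survives in some
finite quotient. -/
def ResiduallyFinite (G : Type*) [Group G] : Prop :=
  ∀ g : G, g ≠ 1 → ∃ N : Subgroup G, N.Normal ∧ N.FiniteIndex ∧ g ∉ N

/-- The finite index normal subgroups of `G`. -/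
def FinNormal (G : Type*) [Group G] := {N : Subgroup G // N.Normal ∧ N.FiniteIndex}

instance {G : Type*} [Group G] (N : FinNormal G) : N.1.Normal := N.2.1

instance {G : Type*} [Group G] (N : FinNormal G) : TopologicalSpace (G ⧸ N.1) := ⊥

/-- The product of all finite quotients of `G`; the profinite completion of `G`
is the closure of the image of `G` in this compact topological group. -/
def ProfinitePi (G : Type*) [Group G] := ∀ N : FinNormal G, G ⧸ N.1

instance {G : Type*} [Group G] : Group (ProfinitePi G) :=
  inferInstanceAs (Group (∀ N : FinNormal G, G ⧸ N.1))

instance {G : Type*} [Group G] : TopologicalSpace (ProfinitePi G) :=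
  inferInstanceAs (TopologicalSpace (∀ N : FinNormal G, G ⧸ N.1))

/-- The canonical map from `G` to the product of its finite quotients. -/
def toProfinitePi (G : Type*) [Group G] : G →* ProfinitePi G where
  toFun g := fun N => QuotientGroup.mk' N.1 g
  map_one' := by
    funext N
    exact map_one (QuotientGroup.mk' N.1)
  map_mul' a b := by
    funext N
    exact map_mul (QuotientGroup.mk' N.1) a b

section Helpers
variable {G : Type*} [Group G]

instance (N : FinNormal G) : DiscreteTopology (G ⧸ N.1) := ⟨rfl⟩

instance (N : FinNormal G) : Subgroup.FiniteIndex N.1 := N.2.2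

instance : CompactSpace (ProfinitePi G) :=
  inferInstanceAs (CompactSpace (∀ N : FinNormal G, G ⧸ N.1))

lemma isOpen_coordEq (N : FinNormal G) (v : G ⧸ N.1) :
    IsOpen {y : ProfinitePi G | y N = v} :=
  (isOpen_discrete {v}).preimage (continuous_apply (A := fun N : FinNormal G => G ⧸ N.1) N)

lemma mem_closure_profinitePi {T : Set (ProfinitePi G)} {x : ProfinitePi G} :
    x ∈ closure T ↔ ∀ F : Finset (FinNormal G), ∃ t ∈ T, ∀ N ∈ F, t N = x N := by
  constructor
  · intro hx F
    have hV : IsOpen {y : ProfinitePi G | ∀ N ∈ F, y N = x N} := by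
      have : {y : ProfinitePi G | ∀ N ∈ F, y N = x N} =
          ⋂ N ∈ F, {y : ProfinitePi G | y N = x N} := by
        ext y; simp [Set.mem_iInter]
      rw [this]
      exact isOpen_biInter_finset fun N _ => isOpen_coordEq N (x N)
    obtain ⟨t, ht1, ht2⟩ := mem_closure_iff.mp hx _ hV (fun N _ => rfl)
    exact ⟨t, ht2, ht1⟩
  · intro h
    rw [mem_closure_iff]
    intro U hU hxU
    obtain ⟨I, u, hu, hsub⟩ :=
      (isOpen_pi_iff (A := fun N : FinNormal G => G ⧸ N.1)).mp hU x hxU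
    obtain ⟨t, htT, ht⟩ := h I
    refine ⟨t, hsub fun N hN => ?_, htT⟩
    rw [ht N hN]; exact (hu N hN).2

lemma mk'_eq_of_le {L N : Subgroup G} [L.Normal] [N.Normal] (hLN : L ≤ N) {a b : G}
    (h : QuotientGroup.mk' L a = QuotientGroup.mk' L b) :
    QuotientGroup.mk' N a = QuotientGroup.mk' N b := by
  obtain ⟨z, hz, hzz⟩ := (QuotientGroup.mk'_eq_mk' (N := L)).mp h
  exact (QuotientGroup.mk'_eq_mk' (N := N)).mpr ⟨z, hLN hz, hzz⟩

end Helpers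

/-- For a residually finite group `G`, a subgroup `H` and `g ∈ G`, the
Centralizer Condition for the pair `(H, g)` is equivalent to the equality
`closure (C_H(g)) = C_{closure H}(g)` in the profinite completion of `G`
(realized as the closure of the image of `G` in the product of its finite
quotients). -/
theorem centralizer_condition_iff_profinite {G : Type*} [Group G]
    (hRF : ResiduallyFinite G) (H : Subgroup G) (g : G) :
    (∀ K : Subgroup G, K.Normal → K.FiniteIndex →
      ∃ (L : Subgroup G) (_ : L.Normal), L.FiniteIndex ∧ L ≤ K ∧
        ∀ x ∈ H, QuotientGroup.mk' L x * QuotientGroup.mk' L g =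
            QuotientGroup.mk' L g * QuotientGroup.mk' L x →
          ∃ c ∈ H, c * g = g * c ∧
            ∃ k ∈ K, QuotientGroup.mk' L x = QuotientGroup.mk' L (c * k)) ↔
    closure (toProfinitePi G '' {h : G | h ∈ H ∧ h * g = g * h}) =
      {x ∈ closure (toProfinitePi G '' (H : Set G)) |
        x * toProfinitePi G g = toProfinitePi G g * x} := by
  classical
  constructor
  · -- CC → equality
    intro hCC
    apply Set.Subset.antisymm
    · -- easy inclusion
      rintro x hx
      refine ⟨closure_mono (Set.image_mono (fun a ha => ha.1)) hx, ?_⟩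
      funext N
      obtain ⟨t, ⟨c, hc, rfl⟩, ht⟩ := mem_closure_profinitePi.mp hx {N}
      have h1 : toProfinitePi G c N = x N := ht N (Finset.mem_singleton_self N)
      show x N * QuotientGroup.mk' N.1 g = QuotientGroup.mk' N.1 g * x N
      rw [← h1]
      show QuotientGroup.mk' N.1 c * QuotientGroup.mk' N.1 g =
        QuotientGroup.mk' N.1 g * QuotientGroup.mk' N.1 c
      rw [← map_mul, ← map_mul, hc.2]
    · rintro x ⟨hxH, hxc⟩
      rw [mem_closure_profinitePi]
      intro F
      set K : Subgroup G := ⨅ N : F, (N : FinNormal G).1 with hK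
      haveI hKn : K.Normal := by
        constructor
        intro n hn h'
        rw [Subgroup.mem_iInf] at hn ⊢
        intro N
        exact (N : FinNormal G).2.1.conj_mem n (hn N) h'
      have hKfi : K.FiniteIndex := Subgroup.finiteIndex_iInf fun N => (N : FinNormal G).2.2
      have hKle : ∀ N ∈ F, K ≤ N.1 := by
        intro N hN y hy
        rw [Subgroup.mem_iInf] at hy
        exact hy ⟨N, hN⟩
      obtain ⟨L, hLn, hLfi, hLK, hprop⟩ := hCC K hKn hKfi
      haveI := hLn
      set NL : FinNormal G := ⟨L, hLn, hLfi⟩ with hNL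
      obtain ⟨t, ⟨h, hhH, rfl⟩, hagree⟩ := mem_closure_profinitePi.mp hxH (insert NL F)
      have hxNL : QuotientGroup.mk' L h = x NL :=
        hagree NL (Finset.mem_insert_self NL F)
      have hcomm : QuotientGroup.mk' L h * QuotientGroup.mk' L g =
          QuotientGroup.mk' L g * QuotientGroup.mk' L h := by
        have h2 : x NL * QuotientGroup.mk' L g = QuotientGroup.mk' L g * x NL :=
          congrFun hxc NL
        rw [← hxNL] at h2
        exact h2
      obtain ⟨c, hcH, hcg, k, hkK, heq⟩ := hprop h hhH hcomm
      refine ⟨toProfinitePi G c, ⟨c, ⟨hcH, hcg⟩, rfl⟩, ?_⟩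
      intro N hN
      rw [← hagree N (Finset.mem_insert_of_mem hN)]
      show QuotientGroup.mk' N.1 c = QuotientGroup.mk' N.1 h
      obtain ⟨z, hz, hzz⟩ := (QuotientGroup.mk'_eq_mk' (N := L)).mp heq
      -- h * z = c * k, so c * (k * z⁻¹) = h
      refine (QuotientGroup.mk'_eq_mk' (N := N.1)).mpr ⟨k * z⁻¹, ?_, ?_⟩
      · exact N.1.mul_mem (hKle N hN hkK) (N.1.inv_mem (hKle N hN (hLK hz)))
      · rw [← mul_assoc, ← hzz, mul_assoc, mul_inv_cancel, mul_one]
  · -- equality → CC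
    intro heq K hKn hKfi
    haveI := hKn
    by_contra hcon
    push_neg at hcon
    -- extract counterexamples
    set ι := {L : Subgroup G // L.Normal ∧ L.FiniteIndex ∧ L ≤ K} with hι
    haveI : Nonempty ι := ⟨⟨K, hKn, hKfi, le_refl K⟩⟩
    have hsel : ∀ L : ι, ∃ a, a ∈ H ∧
        (@QuotientGroup.mk' G _ L.1 L.2.1 (a * g) = @QuotientGroup.mk' G _ L.1 L.2.1 (g * a)) ∧
        ∀ c ∈ H, c * g = g * c → ∀ k ∈ K,
          @QuotientGroup.mk' G _ L.1 L.2.1 a ≠ @QuotientGroup.mk' G _ L.1 L.2.1 (c * k) := by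
      intro L
      haveI := L.2.1
      obtain ⟨a, haH, hacomm, hbad⟩ := hcon L.1 L.2.1 L.2.2.1 L.2.2.2
      refine ⟨a, haH, ?_, fun c hc hcg k hk => hbad c hc hcg k hk⟩
      rw [map_mul, map_mul]
      exact hacomm
    choose a haH hacomm hbad using hsel
    -- the ultrafilter
    let S : ι → Set ι := fun L₀ => {L | L.1 ≤ L₀.1}
    have hdir : ∀ L₀ L₁ : ι, ∃ L₂ : ι, L₂.1 ≤ L₀.1 ∧ L₂.1 ≤ L₁.1 := by
      intro L₀ L₁
      haveI := L₀.2.1; haveI := L₁.2.1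
      haveI := L₀.2.2.1; haveI := L₁.2.2.1
      exact ⟨⟨L₀.1 ⊓ L₁.1, inferInstance, inferInstance,
        le_trans inf_le_left L₀.2.2.2⟩, inf_le_left, inf_le_right⟩
    have hF0 : (⨅ L₀ : ι, Filter.principal (S L₀)).NeBot := by
      apply Filter.iInf_neBot_of_directed'
      · intro L₀ L₁
        obtain ⟨L₂, h0, h1⟩ := hdir L₀ L₁
        exact ⟨L₂, Filter.principal_mono.mpr (fun L hL => le_trans hL h0),
          Filter.principal_mono.mpr (fun L hL => le_trans hL h1)⟩
      · intro L₀
        exact Filter.principal_neBot_iff.mpr ⟨L₀, le_refl L₀.1⟩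
    haveI := hF0
    set U : Ultrafilter ι := Ultrafilter.of (⨅ L₀ : ι, Filter.principal (S L₀)) with hUdef
    have hU : ∀ L₀ : ι, S L₀ ∈ U := by
      intro L₀
      exact Ultrafilter.of_le _ (Filter.mem_iInf_of_mem L₀ (Filter.mem_principal_self _))
    let f : ι → ProfinitePi G := fun L => toProfinitePi G (a L)
    obtain ⟨x, -, hx⟩ := isCompact_univ.ultrafilter_le_nhds (U.map f)
      (by simp [Filter.le_principal_iff])
    have hconv : ∀ N : FinNormal G, {L : ι | f L N = x N} ∈ U := by
      intro N
      have : {y : ProfinitePi G | y N = x N} ∈ nhds x :=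
        (isOpen_coordEq N (x N)).mem_nhds rfl
      exact hx this
    -- x is in the RHS set
    have hxH : x ∈ closure (toProfinitePi G '' (H : Set G)) := by
      rw [mem_closure_profinitePi]
      intro F
      have hmem : (⋂ N ∈ F, {L : ι | f L N = x N}) ∈ U :=
        (Filter.biInter_finset_mem F).mpr fun N _ => hconv N
      obtain ⟨L, hL⟩ := Ultrafilter.nonempty_of_mem hmem
      simp only [Set.mem_iInter] at hL
      exact ⟨f L, ⟨a L, haH L, rfl⟩, fun N hN => hL N hN⟩
    have hxc : x * toProfinitePi G g = toProfinitePi G g * x := by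
      funext N
      haveI := N.2.1; haveI := N.2.2
      have hL₀ : ∃ L₀ : ι, L₀.1 ≤ N.1 :=
        ⟨⟨N.1 ⊓ K, inferInstance, inferInstance, inf_le_right⟩, inf_le_left⟩
      obtain ⟨L₀, hL₀N⟩ := hL₀
      have hmem : (S L₀ ∩ {L : ι | f L N = x N}) ∈ U :=
        Filter.inter_mem (hU L₀) (hconv N)
      obtain ⟨L, hLS, hLval⟩ := Ultrafilter.nonempty_of_mem hmem
      haveI := L.2.1
      have hle : L.1 ≤ N.1 := le_trans hLS hL₀N
      have h2 := mk'_eq_of_le hle (hacomm L)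
      show x N * QuotientGroup.mk' N.1 g = QuotientGroup.mk' N.1 g * x N
      have hLval' : QuotientGroup.mk' N.1 (a L) = x N := hLval
      rw [← hLval', ← map_mul, ← map_mul, h2]
    -- hence x ∈ closure of the image of the centralizer
    have hxC : x ∈ closure (toProfinitePi G '' {h : G | h ∈ H ∧ h * g = g * h}) := by
      rw [heq]; exact ⟨hxH, hxc⟩
    set NK : FinNormal G := ⟨K, hKn, hKfi⟩ with hNK
    obtain ⟨t, ⟨c, ⟨hcH, hcg⟩, rfl⟩, hagree⟩ := mem_closure_profinitePi.mp hxC {NK}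
    have hcK : QuotientGroup.mk' K c = x NK := hagree NK (Finset.mem_singleton_self NK)
    have hmem : (S ⟨K, hKn, hKfi, le_refl K⟩ ∩ {L : ι | f L NK = x NK}) ∈ U :=
      Filter.inter_mem (hU _) (hconv NK)
    obtain ⟨L, hLS, hLval⟩ := Ultrafilter.nonempty_of_mem hmem
    haveI := L.2.1
    have hKval : QuotientGroup.mk' K (a L) = QuotientGroup.mk' K c := by
      rw [hcK]; exact hLval
    obtain ⟨z, hz, hzz⟩ := (QuotientGroup.mk'_eq_mk' (N := K)).mp hKval
    refine hbad L c hcH hcg z⁻¹ (K.inv_mem hz) ?_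
    congr 1
    rw [← hzz, mul_assoc, mul_inv_cancel, mul_one]
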